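/- Let V be a real vector space and let B₁, B₂ : V × V → ℝ be symmetric positive semidefinite bilinear forms. Suppose u₁, u₂ ∈ V satisfy B₁(u₁,u₁) = B₁(u₁,u₂) and B₂(u₂,u₂) = B₂(u₂,u₁). Then B₁(u₁,u₁) − B₂(u₁,u₁) ≤ B₁(u₁,u₁) − B₂(u₂,u₂) ≤ B₁(u₂,u₂) − B₂(u₂,u₂). -/
import Mathlib

/-- Abstract two-sided monotonicity relation for two symmetric positive
semidefinite bilinear forms. -/
theorem stmt_1 {V : Type*} [AddCommGroup V] [Module ℝ V]
    (B₁ B₂ : V →ₗ[ℝ] V →ₗ[ℝ] ℝ)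
    (hsymm₁ : ∀ w w' : V, B₁ w w' = B₁ w' w)
    (hsymm₂ : ∀ w w' : V, B₂ w w' = B₂ w' w)
    (hpsd₁ : ∀ w : V, 0 ≤ B₁ w w)
    (hpsd₂ : ∀ w : V, 0 ≤ B₂ w w)
    (u₁ u₂ : V)
    (h₁ : B₁ u₁ u₁ = B₁ u₁ u₂)
    (h₂ : B₂ u₂ u₂ = B₂ u₂ u₁) :
    B₁ u₁ u₁ - B₂ u₁ u₁ ≤ B₁ u₁ u₁ - B₂ u₂ u₂ ∧
      B₁ u₁ u₁ - B₂ u₂ u₂ ≤ B₁ u₂ u₂ - B₂ u₂ u₂ := by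
  have e1 := hpsd₁ (u₁ - u₂)
  have e2 := hpsd₂ (u₁ - u₂)
  simp only [map_sub, LinearMap.sub_apply] at e1 e2
  have s1 := hsymm₁ u₁ u₂
  have s2 := hsymm₂ u₁ u₂
  constructor <;> linarith
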